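/- In the semigroup F generated by the automaton I, for all n ≥ 8 the relation f_{n-2} f_{n-5} f_n = f_n holds. -/

import Mathlib

/-- The transformation of `{0,1}*` given by the state `s` of the automaton `I`:
it flips the first letter (`φ(s) = ⟨e,e⟩σ`).  Letters: `false = 0`, `true = 1`. -/
def sAct : List Bool → List Bool
  | [] => []
  | a :: w => (!a) :: w

/-- The transformation of `{0,1}*` given by the state `f` of the automaton `I`
(`φ(f) = ⟨s,f⟩ζ`): `0w ↦ 0·w^s` and `1w ↦ 0·w^f`. -/
def fAct : List Bool → List Bool
  | [] => []
  | false :: w => false :: sAct w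
  | true :: w => false :: fAct w

/-- The elements `f_n` of the semigroup: `f₁ = s`, `f₂ = f`,
`f_n = f_{n-2} f_{n-1}` (products written left-to-right). -/
def fA : ℕ → List Bool → List Bool
  | 0 => id
  | 1 => sAct
  | 2 => fAct
  | (n + 3) => fun w => fA (n + 2) (fA (n + 1) w)

/-- The left-to-right product `f_{i₁} f_{i₂} ⋯ f_{i_k}` of the elements `f_i`
along a list of indices. -/
def prodL (l : List ℕ) (w : List Bool) : List Bool :=
  l.foldl (fun v i => fA i v) w

/-- Membership in the semigroup `F` generated by `s` and `f`: `g` is a nonempty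
product of the generators (`false` stands for the generator `s`, `true` for `f`;
products are written left-to-right). -/
def inF (g : List Bool → List Bool) : Prop :=
  ∃ u : List Bool, u ≠ [] ∧
    (fun w => u.foldl (fun v a => if a then fAct v else sAct v) w) = g

def hA : ℕ → List Bool → List Bool
  | 0 => id
  | 1 => id
  | 2 => fAct
  | 3 => sAct
  | (n + 4) => fun w => fA (n + 2) (hA (n + 2) w)
theorem fA_succ (n : ℕ) (w : List Bool) : fA (n+3) w = fA (n+2) (fA (n+1) w) := rfl
theorem hA_succ (n : ℕ) (w : List Bool) : hA (n+4) w = fA (n+2) (hA (n+2) w) := rfl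
theorem ss (w : List Bool) : sAct (sAct w) = w := by
  cases w with
  | nil => rfl
  | cons a w => simp [sAct]
theorem fff (w : List Bool) : fAct (fAct (fAct w)) = fAct w := by
  cases w with
  | nil => rfl
  | cons a w => cases a <;> simp [fAct, ss]
theorem cd : ∀ n a (w : List Bool), fA (n+2) (a::w) = false :: (if a then hA (n+2) w else fA (n+1) w) := by
  intro n
  induction n using Nat.strong_induction_on with
  | _ n ih =>
    match n with
    | 0 => intro a w; cases a <;> rfl
    | 1 => intro a w; cases a <;> rfl
    | (n+2) =>
      intro a w
      calc fA (n+4) (a::w) = fA (n+3) (fA (n+2) (a::w)) := rfl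
        _ = fA (n+3) (false :: (if a then hA (n+2) w else fA (n+1) w)) := by
              rw [ih n (by omega) a w]
        _ = false :: fA (n+2) (if a then hA (n+2) w else fA (n+1) w) := by
              rw [ih (n+1) (by omega) false _]; simp
        _ = false :: (if a then hA (n+4) w else fA (n+3) w) := by cases a <;> rfl
theorem fA_nil : ∀ n, fA n [] = [] := by
  intro n
  induction n using Nat.strong_induction_on with
  | _ n ih =>
    match n with
    | 0 => rfl
    | 1 => rfl
    | 2 => rfl
    | (n+3) => rw [fA_succ, ih (n+1) (by omega), ih (n+2) (by omega)]

-- new part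
theorem sAct_len (w : List Bool) : (sAct w).length = w.length := by
  cases w <;> simp [sAct]
theorem fAct_len (w : List Bool) : (fAct w).length = w.length := by
  induction w with
  | nil => rfl
  | cons a w ih => cases a <;> simp [fAct, sAct_len, ih]
theorem fA_len : ∀ n (w : List Bool), (fA n w).length = w.length := by
  intro n
  induction n using Nat.strong_induction_on with
  | _ n ih =>
    match n with
    | 0 => intro w; rfl
    | 1 => exact sAct_len
    | 2 => exact fAct_len
    | (n+3) => intro w; rw [fA_succ, ih (n+2) (by omega), ih (n+1) (by omega)]
theorem hA_len : ∀ n (w : List Bool), (hA n w).length = w.length := by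
  intro n
  induction n using Nat.strong_induction_on with
  | _ n ih =>
    match n with
    | 0 => intro w; rfl
    | 1 => intro w; rfl
    | 2 => exact fAct_len
    | 3 => exact sAct_len
    | (n+4) => intro w; rw [hA_succ, fA_len, ih (n+2) (by omega)]

theorem cd_false (n : ℕ) (w : List Bool) : fA (n+2) (false::w) = false :: fA (n+1) w := by
  rw [cd]; simp
theorem cd_true (n : ℕ) (w : List Bool) : fA (n+2) (true::w) = false :: hA (n+2) w := by
  rw [cd]; simp

theorem thru : ∀ (j k : ℕ) (v : List Bool),
    fA (j + k + 2) (List.replicate j false ++ v) = List.replicate j false ++ fA (k+2) v := by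
  intro j
  induction j with
  | zero => intro k v; simp
  | succ j ihj =>
    intro k v
    have e : j + 1 + k + 2 = (j + k + 1) + 2 := by omega
    rw [e]
    have e2 : List.replicate (j+1) false ++ v = false :: (List.replicate j false ++ v) := by
      simp [List.replicate_succ]
    rw [e2, cd_false]
    have e3 : j + k + 1 + 1 = j + k + 2 := by omega
    rw [e3, ihj k v, List.replicate_succ]
    simp

theorem hA5_eq (w : List Bool) : hA 5 w = fAct w := by
  show fAct (sAct (sAct w)) = fAct w
  rw [ss]
theorem hA6_eq (w : List Bool) : hA 6 w = fA 4 w := by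
  show fAct (sAct (fAct (fAct (fAct w)))) = fAct (sAct (fAct w))
  rw [fff]

theorem zfA4 : ∀ v : List Bool, ∃ u, fA 4 v = List.replicate (min 2 v.length) false ++ u := by
  intro v
  match v with
  | [] => exact ⟨[], rfl⟩
  | [a] => cases a <;> exact ⟨[], rfl⟩
  | a :: b :: w =>
    have e : min 2 (a :: b :: w).length = 2 := by simp
    rw [e]
    have h1 : fA 4 (a :: b :: w) = false :: (if a then hA 4 (b::w) else fA 3 (b::w)) := cd 2 a _
    cases a <;> simp at h1
    · -- a = false : fA 3 (b::w)
      have h2 : fA 3 (b::w) = false :: (if b then hA 3 w else fA 2 w) := cd 1 b w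
      exact ⟨_, by rw [h1, h2]; rfl⟩
    · -- a = true : hA 4 (b::w) = fAct (fAct (b::w))
      have h2 : hA 4 (b::w) = fAct (fAct (b::w)) := rfl
      cases b <;> simp [fAct] at h2 ⊢ <;> exact ⟨_, by rw [h1, h2]⟩

theorem hzeros : ∀ m (w : List Bool), ∃ v,
    hA (m+5) w = List.replicate (min (m+1) w.length) false ++ v := by
  intro m
  induction m using Nat.strong_induction_on with
  | _ m ih =>
    match m with
    | 0 =>
      intro w
      match w with
      | [] => exact ⟨[], by simp [fA_nil, hA5_eq, fAct]⟩
      | a :: w' =>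
        refine ⟨if a then fAct w' else sAct w', ?_⟩
        rw [hA5_eq]
        cases a <;> simp [fAct]
    | 1 =>
      intro w
      obtain ⟨u, hu⟩ := zfA4 w
      exact ⟨u, by rw [hA6_eq, hu]⟩
    | (m+2) =>
      intro w
      obtain ⟨v, hv⟩ := ih m (by omega) w
      have key : hA (m+7) w = fA (m+5) (hA (m+5) w) := rfl
      rcases le_or_gt w.length (m+1) with h | h
      · -- short case: v = []
        have hm : min (m+1) w.length = w.length := by omega
        rw [hm] at hv
        have hlen : (hA (m+5) w).length = w.length := hA_len _ _
        rw [hv] at hlen; simp at hlen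
        have hv' : hA (m+5) w = List.replicate w.length false := by
          rw [hv, hlen]; simp
        have e : m + 5 = w.length + (m + 3 - w.length) + 2 := by omega
        refine ⟨[], ?_⟩
        rw [key, hv', e]
        have := thru w.length (m + 3 - w.length) []
        simp only [List.append_nil] at this ⊢
        rw [this, fA_nil]
        simp
        omega
      · -- long case
        have hm : min (m+1) w.length = m+1 := by omega
        rw [hm] at hv
        have hlen : (hA (m+5) w).length = w.length := hA_len _ _
        rw [hv] at hlen; simp at hlen
        obtain ⟨u, hu⟩ := zfA4 v
        refine ⟨u, ?_⟩
        have e : m + 5 = (m+1) + 2 + 2 := by omega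
        rw [key, hv, e, thru (m+1) 2 v, hu]
        have e2 : min 2 v.length = min (m+3) w.length - (m+1) := by omega
        rw [e2, ← List.append_assoc, ← List.replicate_add]
        have e3 : m + 1 + (min (m+3) w.length - (m+1)) = min (m+3) w.length := by omega
        rw [e3]

theorem Elem : ∀ k (w : List Bool),
    fA (k+7) (fA (k+2) (hA (k+6) w)) = fA (k+6) (hA (k+6) w) := by
  intro k w
  obtain ⟨v, hv⟩ := hzeros (k+1) w
  have hlen : (hA (k+6) w).length = w.length := hA_len _ _
  rcases le_or_gt w.length (k+1) with h | h
  · -- short: hA (k+6) w = replicate L false, L ≤ k+1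
    have hm : min (k+2) w.length = w.length := by omega
    rw [hm] at hv
    rw [hv] at hlen; simp at hlen
    have hv' : hA (k+6) w = List.replicate w.length false := by rw [hv, hlen]; simp
    rw [hv']
    set L := w.length with hL
    rcases le_or_gt L k with h2 | h2
    · -- L ≤ k : everything fixes replicate L false
      have fix : ∀ c : ℕ, L ≤ c → fA (c+2) (List.replicate L false) = List.replicate L false := by
        intro c hc
        have e : c + 2 = L + (c - L) + 2 := by omega
        rw [e]
        have := thru L (c - L) []
        simpa [fA_nil] using this
      rw [fix k h2, fix (k+5) (by omega), fix (k+4) (by omega)]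
    · -- L = k+1
      have hL1 : L = k + 1 := by omega
      have step1 : fA (k+2) (List.replicate (k+1) false) = List.replicate (k+1) false := by
        have e : List.replicate (k+1) false = List.replicate k false ++ [false] := by
          rw [List.replicate_succ']
        rw [e]
        have := thru k 0 [false]
        simp only [Nat.add_zero] at this
        rw [this]
        rfl
      have fix : ∀ c : ℕ, k+1 ≤ c → fA (c+2) (List.replicate (k+1) false) = List.replicate (k+1) false := by
        intro c hc
        have e : c + 2 = (k+1) + (c - (k+1)) + 2 := by omega
        rw [e]
        have := thru (k+1) (c - (k+1)) []
        simpa [fA_nil] using this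
      rw [hL1, step1, fix (k+5) (by omega), fix (k+4) (by omega)]
  · -- long case
    have hm : min (k+2) w.length = k+2 := by omega
    rw [hm] at hv
    rw [hv]
    have split : List.replicate (k+2) false ++ v
        = List.replicate k false ++ (false :: false :: v) := by
      have : List.replicate (k+2) false = List.replicate k false ++ List.replicate 2 false := by
        rw [← List.replicate_add]
      rw [this, List.append_assoc]; rfl
    -- step 1 : fA (k+2)
    have st1 : fA (k+2) (List.replicate (k+2) false ++ v)
        = List.replicate (k+1) false ++ (true :: v) := by
      rw [split]
      have e : k + 2 = k + 0 + 2 := by omega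
      rw [e]
      rw [thru k 0 (false :: false :: v)]
      have : fA 2 (false :: false :: v) = false :: true :: v := by
        show fAct (false :: false :: v) = _
        simp [fAct, sAct]
      rw [this, List.replicate_succ']
      simp
    -- step 2 : fA (k+7)
    have st2 : fA (k+7) (List.replicate (k+1) false ++ (true :: v))
        = List.replicate (k+2) false ++ fA 4 v := by
      have e : k + 7 = (k+1) + 4 + 2 := by omega
      rw [e, thru (k+1) 4 (true :: v)]
      rw [cd_true 4 v, hA6_eq, List.replicate_succ' (n := k+1)]
      simp
    -- RHS
    have st3 : fA (k+6) (List.replicate (k+2) false ++ v)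
        = List.replicate (k+2) false ++ fA 4 v := by
      have e : k + 6 = (k+2) + 2 + 2 := by omega
      rw [e, thru (k+2) 2 v]
    rw [st1, st2, st3]

theorem Wf (u : List Bool) : fA 6 (sAct (fAct u)) = fA 5 (fAct u) := by
  cases u with
  | nil => show fA 6 [] = fA 5 []; rw [fA_nil, fA_nil]
  | cons a w =>
    have h1 : fAct (a :: w) = false :: (if a then fAct w else sAct w) := by
      cases a <;> rfl
    rw [h1]
    show fA 6 (true :: (if a then fAct w else sAct w)) = _
    rw [cd_true 4, hA6_eq, cd_false 3]

theorem Glem : ∀ k (w : List Bool), fA (k+6) (fA (k+1) (fA (k+4) w)) = fA (k+6) w := by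
  intro k
  induction k using Nat.strong_induction_on with
  | _ k ih =>
    match k with
    | 0 =>
      intro w
      cases w with
      | nil => rw [fA_nil, fA_nil, fA_nil]
      | cons a w =>
        rw [cd 2 a w]
        show fA 6 (sAct _) = _
        rw [show sAct (false :: (if a then hA 4 w else fA 3 w))
            = true :: (if a then hA 4 w else fA 3 w) from rfl]
        rw [cd_true 4, cd 4 a w]
        cases a with
        | false =>
          rw [if_neg (by simp), if_neg (by simp)]
          show false :: hA 6 (fA 3 w) = false :: fA 5 w
          rw [hA6_eq]
          rfl
        | true =>
          rw [if_pos rfl, if_pos rfl]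
          show false :: hA 6 (hA 4 w) = false :: hA 6 w
          rw [hA6_eq]
          show false :: fA 4 (hA 4 w) = false :: hA 6 w
          rfl
    | 1 =>
      intro w
      cases w with
      | nil => rw [fA_nil, fA_nil, fA_nil]
      | cons a w =>
        rw [cd 3 a w]
        show fA 7 (fAct (false :: (if a then hA 5 w else fA 4 w))) = _
        rw [show fAct (false :: (if a then hA 5 w else fA 4 w))
            = false :: sAct (if a then hA 5 w else fA 4 w) from rfl]
        rw [cd_false 5, cd 5 a w]
        cases a with
        | false =>
          rw [if_neg (by simp), if_neg (by simp)]
          show false :: fA 6 (sAct (fA 4 w)) = false :: fA 6 w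
          have e4 : fA 4 w = fAct (sAct (fAct w)) := rfl
          rw [e4, Wf (sAct (fAct w)), ← e4]
          rfl
        | true =>
          rw [if_pos rfl, if_pos rfl]
          show false :: fA 6 (sAct (hA 5 w)) = false :: hA 7 w
          rw [hA5_eq, Wf w, show hA 7 w = fA 5 (hA 5 w) from rfl, hA5_eq]
    | (k+2) =>
      intro w
      cases w with
      | nil => rw [fA_nil, fA_nil, fA_nil]
      | cons a w =>
        rw [show k + 2 + 4 = (k + 4) + 2 from by omega, cd (k+4) a w]
        rw [show k + 2 + 1 = (k + 1) + 2 from by omega, cd_false (k+1)]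
        rw [show k + 2 + 6 = (k + 6) + 2 from by omega, cd_false (k+6), cd (k+6) a w]
        rw [show k + 1 + 1 = k + 2 from by omega, show k + 6 + 1 = k + 7 from by omega]
        cases a with
        | false =>
          rw [if_neg (by simp), if_neg (by simp)]
          rw [show k + 4 + 1 = k + 5 from by omega]
          have := ih (k+1) (by omega) w
          rw [show k + 1 + 6 = k + 7 from by omega, show k + 1 + 1 = k + 2 from by omega,
              show k + 1 + 4 = k + 5 from by omega] at this
          rw [this]
        | true =>
          rw [if_pos rfl, if_pos rfl]
          rw [show k + 4 + 2 = k + 6 from by omega, show k + 6 + 2 = k + 8 from by omega]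
          rw [Elem k w]
          show false :: fA (k+6) (hA (k+6) w) = false :: hA (k+8) w
          rfl


/-- In `F`, for all `n ≥ 8` the relation `f_{n-2} f_{n-5} f_n = f_n` holds
(products written left-to-right). -/
theorem fn_absorb (n : ℕ) (hn : 8 ≤ n) :
    ∀ w : List Bool, fA n (fA (n - 5) (fA (n - 2) w)) = fA n w := by
  obtain ⟨k, rfl⟩ : ∃ k, n = k + 8 := ⟨n - 8, by omega⟩
  intro w
  rw [show k + 8 - 5 = k + 3 from by omega, show k + 8 - 2 = k + 6 from by omega]
  have := Glem (k+2) w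
  rw [show k + 2 + 6 = k + 8 from by omega, show k + 2 + 1 = k + 3 from by omega,
      show k + 2 + 4 = k + 6 from by omega] at this
  exact this
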